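/- arXiv:2603.12087 — 3 statements merged into one kernel-verified Lean document; each statement's English description precedes it below -/
import Mathlib

section
/- Performance difference lemma: For any two policies π and π' in a finite discounted MDP, and any initial state distribution ρ ∈ Δ(S), let d^{π'}_ρ(s,a) := (1−γ) Σ_{t≥0} γ^t Pr(s_t = s, a_t = a) for the trajectory generated by s₀ ~ ρ, a_t ~ π'(·|s_t) for all t ≥ 0 and s_{t+1} ~ P(·|s_t,a_t). Then V^{π'}(ρ) − V^{π}(ρ) = (1/(1−γ)) · E_{(s,a)~d^{π'}_ρ}[A^{π}(s,a)], where V^{π}(ρ) := E_{s~ρ}[V^{π}(s)] and A^{π}(s,a) := Q^{π}(s,a) − V^{π}(s) is the advantage function. -/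
open Finset

/-- `p` is a probability distribution on the finite type `X`. -/
def IsDist {X : Type*} [Fintype X] (p : X → ℝ) : Prop :=
  (∀ x, 0 ≤ p x) ∧ ∑ x, p x = 1

/-- `p` is a probability distribution on state–action pairs. -/
def IsDist2 {S A : Type*} [Fintype S] [Fintype A] (p : S → A → ℝ) : Prop :=
  (∀ s a, 0 ≤ p s a) ∧ ∑ s, ∑ a, p s a = 1

/-- `P` is a transition kernel: `P s a` is a distribution over next states. -/
def IsKernel {S A : Type*} [Fintype S] [Fintype A] (P : S → A → S → ℝ) : Prop :=
  ∀ s a, IsDist (P s a)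

/-- `π` is a (stationary Markov) policy: `π s` is a distribution over actions. -/
def IsPolicy {S A : Type*} [Fintype S] [Fintype A] (π : S → A → ℝ) : Prop :=
  ∀ s, IsDist (π s)

/-- One-step evolution of a state–action distribution under kernel `P` and policy `π`:
the next state is drawn from `P`, the next action from `π`. -/
noncomputable def step {S A : Type*} [Fintype S] [Fintype A]
    (P : S → A → S → ℝ) (π : S → A → ℝ) (d : S → A → ℝ) : S → A → ℝ :=
  fun s' a' => (∑ s, ∑ a, d s a * P s a s') * π s' a'

/-- Distribution of `(s_t, a_t)` along the trajectory started at the state–action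
distribution `μ` and evolving under `P` and `π`. -/
noncomputable def traj {S A : Type*} [Fintype S] [Fintype A]
    (P : S → A → S → ℝ) (π : S → A → ℝ) (μ : S → A → ℝ) (t : ℕ) : S → A → ℝ :=
  (step P π)^[t] μ

/-- Discounted state–action visitation distribution
`d^π(s,a) = (1-γ) ∑_t γ^t Pr(s_t = s, a_t = a; π, μ)`. -/
noncomputable def dvisit {S A : Type*} [Fintype S] [Fintype A]
    (P : S → A → S → ℝ) (π : S → A → ℝ) (γ : ℝ) (μ : S → A → ℝ) (s : S) (a : A) : ℝ :=
  (1 - γ) * ∑' t : ℕ, γ ^ t * traj P π μ t s a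

/-- Point mass at the state–action pair `(s, a)`. -/
def dirac {S A : Type*} [DecidableEq S] [DecidableEq A] (s : S) (a : A) : S → A → ℝ :=
  fun s' a' => if s' = s ∧ a' = a then 1 else 0

/-- Action-value function `Q^π(s,a) = E[∑_t γ^t r(s_t,a_t) | s₀ = s, a₀ = a]`,
with later actions drawn from `π` and transitions from `P`. -/
noncomputable def Qpi {S A : Type*} [Fintype S] [Fintype A] [DecidableEq S] [DecidableEq A]
    (P : S → A → S → ℝ) (r : S → A → ℝ) (π : S → A → ℝ) (γ : ℝ) (s : S) (a : A) : ℝ :=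
  ∑' t : ℕ, γ ^ t * ∑ s', ∑ a', traj P π (dirac s a) t s' a' * r s' a'

/-- Value function `V^π(s) = E_{a ~ π(·|s)}[Q^π(s,a)]`. -/
noncomputable def Vpi {S A : Type*} [Fintype S] [Fintype A] [DecidableEq S] [DecidableEq A]
    (P : S → A → S → ℝ) (r : S → A → ℝ) (π : S → A → ℝ) (γ : ℝ) (s : S) : ℝ :=
  ∑ a, π s a * Qpi P r π γ s a

/-- Bellman error of a function `Q` with respect to the policy `π`
(the TD error `ε_td` when `Q` is a target critic, and the cross-domain Bellman
error `ε_cd` when `Q` is a composed source critic `g`). -/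
noncomputable def bellErr {S A : Type*} [Fintype S] [Fintype A]
    (P : S → A → S → ℝ) (r : S → A → ℝ) (γ : ℝ) (π : S → A → ℝ)
    (Q : S → A → ℝ) (s : S) (a : A) : ℝ :=
  |Q s a - r s a - γ * ∑ s', P s a s' * ∑ a', π s' a' * Q s' a'|

/-- NPG-style exponentiated-update policy sequence: `npg ν η 0` is the uniform policy,
and `npg ν η (t+1)` is the exponentiated update of `npg ν η t` along `ν t`. -/
noncomputable def npg {S A : Type*} [Fintype S] [Fintype A]
    (ν : ℕ → S → A → ℝ) (η : ℝ) : ℕ → S → A → ℝ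
  | 0 => fun _ _ => (Fintype.card A : ℝ)⁻¹
  | t + 1 => fun s a =>
      npg ν η t s a * Real.exp (η * ν t s a) /
        ∑ a', npg ν η t s a' * Real.exp (η * ν t s a')

set_option linter.unusedSectionVars false
section PDLAux

variable {S A : Type*} [Fintype S] [Fintype A] [DecidableEq S] [DecidableEq A]

lemma traj_zero (P : S → A → S → ℝ) (π : S → A → ℝ) (μ : S → A → ℝ) :
    traj P π μ 0 = μ := rfl

lemma traj_succ (P : S → A → S → ℝ) (π : S → A → ℝ) (μ : S → A → ℝ) (t : ℕ) :
    traj P π μ (t + 1) = traj P π (step P π μ) t := by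
  simp [traj, Function.iterate_succ_apply]

lemma traj_succ' (P : S → A → S → ℝ) (π : S → A → ℝ) (μ : S → A → ℝ) (t : ℕ) :
    traj P π μ (t + 1) = step P π (traj P π μ t) := by
  simp [traj, Function.iterate_succ_apply']

lemma step_nonneg {P : S → A → S → ℝ} {π : S → A → ℝ} (hP : IsKernel P) (hπ : IsPolicy π)
    {d : S → A → ℝ} (hd : ∀ s a, 0 ≤ d s a) : ∀ s a, 0 ≤ step P π d s a := by
  intro s a
  exact mul_nonneg
    (Finset.sum_nonneg fun s' _ => Finset.sum_nonneg fun a' _ =>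
      mul_nonneg (hd s' a') ((hP s' a').1 s))
    ((hπ s).1 a)

lemma step_mass {P : S → A → S → ℝ} {π : S → A → ℝ} (hP : IsKernel P) (hπ : IsPolicy π)
    (d : S → A → ℝ) : ∑ s, ∑ a, step P π d s a = ∑ s, ∑ a, d s a := by
  unfold step
  have h1 : ∀ s', ∑ a', (∑ s, ∑ a, d s a * P s a s') * π s' a'
      = ∑ s, ∑ a, d s a * P s a s' := by
    intro s'
    rw [← Finset.mul_sum, (hπ s').2, mul_one]
  simp_rw [h1]
  rw [Finset.sum_comm]
  refine Finset.sum_congr rfl fun s _ => ?_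
  rw [Finset.sum_comm]
  refine Finset.sum_congr rfl fun a _ => ?_
  rw [← Finset.mul_sum, (hP s a).2, mul_one]

lemma traj_nonneg {P : S → A → S → ℝ} {π : S → A → ℝ} (hP : IsKernel P) (hπ : IsPolicy π) :
    ∀ (t : ℕ) (μ : S → A → ℝ), (∀ s a, 0 ≤ μ s a) → ∀ s a, 0 ≤ traj P π μ t s a := by
  intro t
  induction t with
  | zero => intro μ hμ s a; simpa [traj_zero] using hμ s a
  | succ t ih =>
    intro μ hμ s a
    rw [traj_succ]
    exact ih _ (step_nonneg hP hπ hμ) s a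

lemma traj_mass {P : S → A → S → ℝ} {π : S → A → ℝ} (hP : IsKernel P) (hπ : IsPolicy π) :
    ∀ (t : ℕ) (μ : S → A → ℝ), ∑ s, ∑ a, traj P π μ t s a = ∑ s, ∑ a, μ s a := by
  intro t
  induction t with
  | zero => intro μ; rfl
  | succ t ih =>
    intro μ
    rw [traj_succ, ih, step_mass hP hπ]

lemma traj_le_one {P : S → A → S → ℝ} {π : S → A → ℝ} (hP : IsKernel P) (hπ : IsPolicy π)
    {μ : S → A → ℝ} (hμ : IsDist2 μ) (t : ℕ) (s : S) (a : A) :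
    traj P π μ t s a ≤ 1 := by
  have h0 := traj_nonneg hP hπ t μ hμ.1
  calc traj P π μ t s a ≤ ∑ a', traj P π μ t s a' :=
        Finset.single_le_sum (fun a' _ => h0 s a') (Finset.mem_univ a)
    _ ≤ ∑ s', ∑ a', traj P π μ t s' a' :=
        Finset.single_le_sum (fun s' _ => Finset.sum_nonneg fun a' _ => h0 s' a')
          (Finset.mem_univ s)
    _ = 1 := by rw [traj_mass hP hπ, hμ.2]

lemma traj_sum (P : S → A → S → ℝ) (π : S → A → ℝ) :
    ∀ (t : ℕ) (c : S × A → ℝ) (f : S × A → S → A → ℝ) (s' : S) (a' : A),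
      traj P π (fun s a => ∑ p : S × A, c p * f p s a) t s' a'
        = ∑ p : S × A, c p * traj P π (f p) t s' a' := by
  intro t
  induction t with
  | zero => intro c f s' a'; rfl
  | succ t ih =>
    intro c f s' a'
    have hstep : step P π (fun s a => ∑ p : S × A, c p * f p s a)
        = fun s a => ∑ p : S × A, c p * step P π (f p) s a := by
      funext s₁ a₁
      simp only [step]
      have h2 : (∑ s, ∑ a, (∑ p : S × A, c p * f p s a) * P s a s₁)
          = ∑ p : S × A, c p * ∑ s, ∑ a, f p s a * P s a s₁ := by
        simp_rw [Finset.sum_mul, Finset.mul_sum, mul_assoc]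
        exact (Finset.sum_congr rfl fun s _ => Finset.sum_comm).trans Finset.sum_comm
      rw [h2, Finset.sum_mul]
      exact Finset.sum_congr rfl fun p _ => by ring
    rw [traj_succ, hstep, ih]
    exact Finset.sum_congr rfl fun p _ => by rw [traj_succ]

lemma sum_dirac_mul (μ : S → A → ℝ) (s : S) (a : A) :
    ∑ p : S × A, μ p.1 p.2 * dirac p.1 p.2 s a = μ s a := by
  rw [Finset.sum_eq_single ((s, a) : S × A)]
  · simp [dirac]
  · intro p _ hp
    have : ¬(s = p.1 ∧ a = p.2) := by
      rintro ⟨h1, h2⟩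
      exact hp (by cases p; simp_all)
    simp [dirac, this]
  · intro h; exact absurd (Finset.mem_univ _) h

lemma traj_decomp (P : S → A → S → ℝ) (π : S → A → ℝ) (μ : S → A → ℝ) (t : ℕ) (s' : S) (a' : A) :
    traj P π μ t s' a' = ∑ p : S × A, μ p.1 p.2 * traj P π (dirac p.1 p.2) t s' a' := by
  have hμ : μ = fun s a => ∑ p : S × A, μ p.1 p.2 * dirac p.1 p.2 s a := by
    funext s a; rw [sum_dirac_mul]
  conv_lhs => rw [hμ]
  exact traj_sum P π t (fun p => μ p.1 p.2) (fun p => dirac p.1 p.2) s' a'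

lemma dirac_dist (s : S) (a : A) : IsDist2 (dirac s a : S → A → ℝ) := by
  constructor
  · intro s' a'; unfold dirac; split <;> norm_num
  · rw [show (∑ s', ∑ a', dirac s a s' a') = ∑ p : S × A, dirac s a p.1 p.2 by
      rw [Fintype.sum_prod_type]]
    rw [Finset.sum_eq_single ((s, a) : S × A)]
    · simp [dirac]
    · intro p _ hp
      have : ¬(p.1 = s ∧ p.2 = a) := by
        rintro ⟨h1, h2⟩; exact hp (by cases p; simp_all)
      simp [dirac, this]
    · intro h; exact absurd (Finset.mem_univ _) h

end PDLAux

section PDLAux2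

variable {S A : Type*} [Fintype S] [Fintype A] [DecidableEq S] [DecidableEq A]

/-- Bound on per-step expected reward. -/
lemma reward_step_bounds {P : S → A → S → ℝ} {π : S → A → ℝ} {r : S → A → ℝ}
    (hP : IsKernel P) (hπ : IsPolicy π) (hr : ∀ s a, 0 ≤ r s a ∧ r s a ≤ 1)
    {μ : S → A → ℝ} (hμ : IsDist2 μ) (t : ℕ) :
    0 ≤ ∑ s', ∑ a', traj P π μ t s' a' * r s' a' ∧
      ∑ s', ∑ a', traj P π μ t s' a' * r s' a' ≤ 1 := by
  have h0 := traj_nonneg hP hπ t μ hμ.1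
  constructor
  · exact Finset.sum_nonneg fun s' _ => Finset.sum_nonneg fun a' _ =>
      mul_nonneg (h0 s' a') (hr s' a').1
  · calc ∑ s', ∑ a', traj P π μ t s' a' * r s' a'
        ≤ ∑ s', ∑ a', traj P π μ t s' a' := by
          refine Finset.sum_le_sum fun s' _ => Finset.sum_le_sum fun a' _ => ?_
          nlinarith [(hr s' a').2, h0 s' a']
    _ = 1 := by rw [traj_mass hP hπ, hμ.2]

lemma summable_of_geom_bound {γ : ℝ} (hγ0 : 0 ≤ γ) (hγ1 : γ < 1) (C : ℝ) {f : ℕ → ℝ}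
    (h0 : ∀ t, 0 ≤ f t) (h : ∀ t, f t ≤ C * γ ^ t) : Summable f :=
  Summable.of_nonneg_of_le h0 h ((summable_geometric_of_lt_one hγ0 hγ1).mul_left C)

lemma summable_qterm {P : S → A → S → ℝ} {π : S → A → ℝ} {r : S → A → ℝ} {γ : ℝ}
    (hP : IsKernel P) (hπ : IsPolicy π) (hr : ∀ s a, 0 ≤ r s a ∧ r s a ≤ 1)
    (hγ0 : 0 ≤ γ) (hγ1 : γ < 1) {μ : S → A → ℝ} (hμ : IsDist2 μ) :
    Summable (fun t : ℕ => γ ^ t * ∑ s', ∑ a', traj P π μ t s' a' * r s' a') := by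
  refine summable_of_geom_bound hγ0 hγ1 1 (fun t => ?_) (fun t => ?_)
  · exact mul_nonneg (pow_nonneg hγ0 t) (reward_step_bounds hP hπ hr hμ t).1
  · rw [one_mul]
    calc γ ^ t * ∑ s', ∑ a', traj P π μ t s' a' * r s' a'
        ≤ γ ^ t * 1 := by
          exact mul_le_mul_of_nonneg_left (reward_step_bounds hP hπ hr hμ t).2
            (pow_nonneg hγ0 t)
    _ = γ ^ t := mul_one _

lemma Qpi_nonneg {P : S → A → S → ℝ} {π : S → A → ℝ} {r : S → A → ℝ} {γ : ℝ}
    (hP : IsKernel P) (hπ : IsPolicy π) (hr : ∀ s a, 0 ≤ r s a ∧ r s a ≤ 1)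
    (hγ0 : 0 ≤ γ) (s : S) (a : A) : 0 ≤ Qpi P r π γ s a :=
  tsum_nonneg fun t => mul_nonneg (pow_nonneg hγ0 t)
    (reward_step_bounds hP hπ hr (dirac_dist s a) t).1

lemma Qpi_le {P : S → A → S → ℝ} {π : S → A → ℝ} {r : S → A → ℝ} {γ : ℝ}
    (hP : IsKernel P) (hπ : IsPolicy π) (hr : ∀ s a, 0 ≤ r s a ∧ r s a ≤ 1)
    (hγ0 : 0 ≤ γ) (hγ1 : γ < 1) (s : S) (a : A) : Qpi P r π γ s a ≤ (1 - γ)⁻¹ := by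
  rw [← tsum_geometric_of_lt_one hγ0 hγ1]
  refine Summable.tsum_le_tsum (fun t => ?_) (summable_qterm hP hπ hr hγ0 hγ1 (dirac_dist s a))
    (summable_geometric_of_lt_one hγ0 hγ1)
  calc γ ^ t * ∑ s', ∑ a', traj P π (dirac s a) t s' a' * r s' a'
      ≤ γ ^ t * 1 := mul_le_mul_of_nonneg_left
        (reward_step_bounds hP hπ hr (dirac_dist s a) t).2 (pow_nonneg hγ0 t)
  _ = γ ^ t := mul_one _

lemma Vpi_nonneg {P : S → A → S → ℝ} {π : S → A → ℝ} {r : S → A → ℝ} {γ : ℝ}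
    (hP : IsKernel P) (hπ : IsPolicy π) (hr : ∀ s a, 0 ≤ r s a ∧ r s a ≤ 1)
    (hγ0 : 0 ≤ γ) (s : S) : 0 ≤ Vpi P r π γ s :=
  Finset.sum_nonneg fun a _ => mul_nonneg ((hπ s).1 a) (Qpi_nonneg hP hπ hr hγ0 s a)

lemma Vpi_le {P : S → A → S → ℝ} {π : S → A → ℝ} {r : S → A → ℝ} {γ : ℝ}
    (hP : IsKernel P) (hπ : IsPolicy π) (hr : ∀ s a, 0 ≤ r s a ∧ r s a ≤ 1)
    (hγ0 : 0 ≤ γ) (hγ1 : γ < 1) (s : S) : Vpi P r π γ s ≤ (1 - γ)⁻¹ := by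
  calc Vpi P r π γ s ≤ ∑ a, π s a * (1 - γ)⁻¹ := by
        refine Finset.sum_le_sum fun a _ => ?_
        exact mul_le_mul_of_nonneg_left (Qpi_le hP hπ hr hγ0 hγ1 s a) ((hπ s).1 a)
    _ = (1 - γ)⁻¹ := by rw [← Finset.sum_mul, (hπ s).2, one_mul]

/-- Expected discounted return from an initial state–action distribution. -/
lemma value_eq_tsum {P : S → A → S → ℝ} {π : S → A → ℝ} {r : S → A → ℝ} {γ : ℝ}
    (hP : IsKernel P) (hπ : IsPolicy π) (hr : ∀ s a, 0 ≤ r s a ∧ r s a ≤ 1)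
    (hγ0 : 0 ≤ γ) (hγ1 : γ < 1) (μ : S → A → ℝ) :
    ∑' t : ℕ, γ ^ t * ∑ s', ∑ a', traj P π μ t s' a' * r s' a'
      = ∑ p : S × A, μ p.1 p.2 * Qpi P r π γ p.1 p.2 := by
  have hdec : ∀ t : ℕ, ∑ s', ∑ a', traj P π μ t s' a' * r s' a'
      = ∑ p : S × A, μ p.1 p.2 * ∑ s', ∑ a', traj P π (dirac p.1 p.2) t s' a' * r s' a' := by
    intro t
    have h1 : ∀ s' a', traj P π μ t s' a' * r s' a'
        = ∑ p : S × A, μ p.1 p.2 * (traj P π (dirac p.1 p.2) t s' a' * r s' a') := by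
      intro s' a'
      rw [traj_decomp P π μ t s' a', Finset.sum_mul]
      exact Finset.sum_congr rfl fun p _ => mul_assoc _ _ _
    simp_rw [h1, Finset.mul_sum]
    exact (Finset.sum_congr rfl fun s' _ => Finset.sum_comm).trans Finset.sum_comm
  have hsum : ∀ p : S × A, Summable (fun t : ℕ => μ p.1 p.2 *
      (γ ^ t * ∑ s', ∑ a', traj P π (dirac p.1 p.2) t s' a' * r s' a')) :=
    fun p => (summable_qterm hP hπ hr hγ0 hγ1 (dirac_dist p.1 p.2)).mul_left _
  calc ∑' t : ℕ, γ ^ t * ∑ s', ∑ a', traj P π μ t s' a' * r s' a'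
      = ∑' t : ℕ, ∑ p : S × A, μ p.1 p.2 *
          (γ ^ t * ∑ s', ∑ a', traj P π (dirac p.1 p.2) t s' a' * r s' a') := by
        refine tsum_congr fun t => ?_
        rw [hdec t, Finset.mul_sum]
        exact Finset.sum_congr rfl fun p _ => by ring
    _ = ∑ p : S × A, ∑' t : ℕ, μ p.1 p.2 *
          (γ ^ t * ∑ s', ∑ a', traj P π (dirac p.1 p.2) t s' a' * r s' a') :=
        Summable.tsum_finsetSum fun p _ => hsum p
    _ = ∑ p : S × A, μ p.1 p.2 * Qpi P r π γ p.1 p.2 :=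
        Finset.sum_congr rfl fun p _ => by rw [tsum_mul_left]; rfl

end PDLAux2

section PDLAux3

variable {S A : Type*} [Fintype S] [Fintype A] [DecidableEq S] [DecidableEq A]

lemma sum_mul_dirac (h : S → A → ℝ) (s : S) (a : A) :
    ∑ s', ∑ a', dirac s a s' a' * h s' a' = h s a := by
  rw [Finset.sum_eq_single s]
  · rw [Finset.sum_eq_single a]
    · simp [dirac]
    · intro b _ hb; simp [dirac, hb]
    · simp
  · intro b _ hb; simp [dirac, hb]
  · simp

lemma step_dirac (P : S → A → S → ℝ) (π : S → A → ℝ) (s : S) (a : A) :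
    step P π (dirac s a) = fun s₁ a₁ => P s a s₁ * π s₁ a₁ := by
  funext s₁ a₁
  simp only [step]
  rw [sum_mul_dirac (fun s₂ a₂ => P s₂ a₂ s₁) s a]

/-- Bellman equation for `Qpi`. -/
lemma bellman {P : S → A → S → ℝ} {π : S → A → ℝ} {r : S → A → ℝ} {γ : ℝ}
    (hP : IsKernel P) (hπ : IsPolicy π) (hr : ∀ s a, 0 ≤ r s a ∧ r s a ≤ 1)
    (hγ0 : 0 ≤ γ) (hγ1 : γ < 1) (s : S) (a : A) :
    Qpi P r π γ s a = r s a + γ * ∑ s', P s a s' * Vpi P r π γ s' := by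
  have hs : Summable (fun t : ℕ => γ ^ t * ∑ s', ∑ a', traj P π (dirac s a) t s' a' * r s' a') :=
    summable_qterm hP hπ hr hγ0 hγ1 (dirac_dist s a)
  have h0 : (∑ s', ∑ a', traj P π (dirac s a) 0 s' a' * r s' a') = r s a := by
    rw [traj_zero]; exact sum_mul_dirac r s a
  have hg : ∀ t : ℕ, (∑ s', ∑ a', traj P π (dirac s a) (t + 1) s' a' * r s' a')
      = ∑ s', ∑ a', traj P π (fun s₁ a₁ => P s a s₁ * π s₁ a₁) t s' a' * r s' a' := by
    intro t
    rw [traj_succ, step_dirac]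
  calc Qpi P r π γ s a
      = γ ^ 0 * ∑ s', ∑ a', traj P π (dirac s a) 0 s' a' * r s' a'
        + ∑' t : ℕ, γ ^ (t + 1) * ∑ s', ∑ a', traj P π (dirac s a) (t + 1) s' a' * r s' a' :=
        Summable.tsum_eq_zero_add hs
    _ = r s a + ∑' t : ℕ, γ *
          (γ ^ t * ∑ s', ∑ a', traj P π (fun s₁ a₁ => P s a s₁ * π s₁ a₁) t s' a' * r s' a') := by
        rw [pow_zero, one_mul, h0]
        congr 1
        refine tsum_congr fun t => ?_
        rw [hg t, pow_succ]
        ring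
    _ = r s a + γ * ∑ p : S × A, (P s a p.1 * π p.1 p.2) * Qpi P r π γ p.1 p.2 := by
        rw [tsum_mul_left, value_eq_tsum hP hπ hr hγ0 hγ1]
    _ = r s a + γ * ∑ s', P s a s' * Vpi P r π γ s' := by
        congr 1
        rw [Fintype.sum_prod_type]
        refine congrArg (γ * ·) (Finset.sum_congr rfl fun s' _ => ?_)
        rw [Vpi, Finset.mul_sum]
        exact Finset.sum_congr rfl fun a' _ => by ring

end PDLAux3


set_option maxHeartbeats 1000000 in
/-- **Performance difference lemma.** For any two policies `π` and `π'` and any initial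
state distribution `ρ`,
`V^{π'}(ρ) − V^{π}(ρ) = (1/(1−γ)) E_{(s,a) ~ d^{π'}_ρ}[A^{π}(s,a)]`,
where `d^{π'}_ρ` is the visitation distribution of the trajectory started with
`s₀ ~ ρ`, `a_t ~ π'(·|s_t)` and `A^π = Q^π − V^π`. -/
theorem performance_difference_lemma
    {S A : Type*} [Fintype S] [Fintype A] [Nonempty S] [Nonempty A]
    [DecidableEq S] [DecidableEq A]
    (P : S → A → S → ℝ) (r : S → A → ℝ) (γ : ℝ) (μ : S → A → ℝ)
    (hP : IsKernel P) (hr : ∀ s a, 0 ≤ r s a ∧ r s a ≤ 1)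
    (hγ0 : 0 ≤ γ) (hγ1 : γ < 1) (hμ : IsDist2 μ)
    (π π' : S → A → ℝ) (hπ : IsPolicy π) (hπ' : IsPolicy π')
    (ρ : S → ℝ) (hρ : IsDist ρ) :
    (∑ s, ρ s * Vpi P r π' γ s) - ∑ s, ρ s * Vpi P r π γ s =
      (1 / (1 - γ)) *
        ∑ s, ∑ a, dvisit P π' γ (fun s a => ρ s * π' s a) s a *
          (Qpi P r π γ s a - Vpi P r π γ s) := by
  have h1γ : (0:ℝ) < 1 - γ := by linarith
  have hinv : (0:ℝ) ≤ (1 - γ)⁻¹ := inv_nonneg.mpr h1γ.le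
  set V : S → ℝ := Vpi P r π γ with hVdef
  set Q : S → A → ℝ := Qpi P r π γ with hQdef
  set μ' : S → A → ℝ := fun s a => ρ s * π' s a with hμ'def
  have hμ'dist : IsDist2 μ' := by
    refine ⟨fun s a => mul_nonneg (hρ.1 s) ((hπ' s).1 a), ?_⟩
    have : ∀ s, ∑ a, μ' s a = ρ s := by
      intro s
      simp only [hμ'def]
      rw [← Finset.mul_sum, (hπ' s).2, mul_one]
    simp_rw [this]
    exact hρ.2
  set D : ℕ → S → A → ℝ := fun t => traj P π' μ' t with hDdef
  have hD0 : ∀ t s a, 0 ≤ D t s a := fun t s a => traj_nonneg hP hπ' t μ' hμ'dist.1 s a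
  have hD1 : ∀ t s a, D t s a ≤ 1 := fun t s a => traj_le_one hP hπ' hμ'dist t s a
  set R : ℕ → ℝ := fun t => ∑ s, ∑ a, D t s a * r s a with hRdef
  set W : ℕ → ℝ := fun t => ∑ s, ∑ a, D t s a * V s with hWdef
  have hVnn : ∀ s, 0 ≤ V s := fun s => Vpi_nonneg hP hπ hr hγ0 s
  have hVle : ∀ s, V s ≤ (1 - γ)⁻¹ := fun s => Vpi_le hP hπ hr hγ0 hγ1 s
  have hWnn : ∀ t, 0 ≤ W t := fun t =>
    Finset.sum_nonneg fun s _ => Finset.sum_nonneg fun a _ =>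
      mul_nonneg (hD0 t s a) (hVnn s)
  have hWle : ∀ t, W t ≤ (1 - γ)⁻¹ := by
    intro t
    calc W t ≤ ∑ s, ∑ a, D t s a * (1 - γ)⁻¹ := by
          refine Finset.sum_le_sum fun s _ => Finset.sum_le_sum fun a _ => ?_
          exact mul_le_mul_of_nonneg_left (hVle s) (hD0 t s a)
      _ = (∑ s, ∑ a, D t s a) * (1 - γ)⁻¹ := by
          simp_rw [Finset.sum_mul]
      _ = (1 - γ)⁻¹ := by
          simp only [hDdef]
          rw [traj_mass hP hπ', hμ'dist.2, one_mul]
  have hsumR : Summable (fun t : ℕ => γ ^ t * R t) :=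
    summable_qterm hP hπ' hr hγ0 hγ1 hμ'dist
  have hsumW : Summable (fun t : ℕ => γ ^ t * W t) := by
    refine summable_of_geom_bound hγ0 hγ1 (1 - γ)⁻¹
      (fun t => mul_nonneg (pow_nonneg hγ0 t) (hWnn t)) (fun t => ?_)
    calc γ ^ t * W t ≤ γ ^ t * (1 - γ)⁻¹ :=
          mul_le_mul_of_nonneg_left (hWle t) (pow_nonneg hγ0 t)
      _ = (1 - γ)⁻¹ * γ ^ t := mul_comm _ _
  have hshiftW : Summable (fun t : ℕ => γ ^ (t + 1) * W (t + 1)) :=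
    (summable_nat_add_iff 1).mpr hsumW
  -- key one-step identity
  have hW1 : ∀ t : ℕ, W (t + 1) = ∑ s, ∑ a, D t s a * ∑ s', P s a s' * V s' := by
    intro t
    have hDt : D (t + 1) = step P π' (D t) := traj_succ' P π' μ' t
    calc W (t + 1) = ∑ s', ∑ a', step P π' (D t) s' a' * V s' := by
          simp only [hWdef]; rw [hDt]
      _ = ∑ s', (∑ s, ∑ a, D t s a * P s a s') * V s' := by
          refine Finset.sum_congr rfl fun s' _ => ?_
          simp only [step]
          rw [← Finset.sum_mul, ← Finset.mul_sum, (hπ' s').2, mul_one]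
      _ = ∑ s, ∑ a, D t s a * ∑ s', P s a s' * V s' := by
          simp_rw [Finset.sum_mul, Finset.mul_sum, mul_assoc]
          exact Finset.sum_comm.trans (Finset.sum_congr rfl fun s _ => Finset.sum_comm)
  have hkey : ∀ t : ℕ, (∑ s, ∑ a, D t s a * (Q s a - V s)) = R t + γ * W (t + 1) - W t := by
    intro t
    have hterm : ∀ s a, D t s a * (Q s a - V s)
        = D t s a * r s a + γ * (D t s a * ∑ s', P s a s' * V s') - D t s a * V s := by
      intro s a
      simp only [hQdef, hVdef]
      rw [bellman hP hπ hr hγ0 hγ1 s a]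
      ring
    have e1 : ∀ s, ∑ a, (D t s a * r s a + γ * (D t s a * ∑ s', P s a s' * V s')
          - D t s a * V s)
        = (∑ a, D t s a * r s a) + γ * (∑ a, D t s a * ∑ s', P s a s' * V s')
          - ∑ a, D t s a * V s := by
      intro s
      rw [Finset.sum_sub_distrib, Finset.sum_add_distrib, ← Finset.mul_sum]
    calc (∑ s, ∑ a, D t s a * (Q s a - V s))
        = ∑ s, ((∑ a, D t s a * r s a) + γ * (∑ a, D t s a * ∑ s', P s a s' * V s')
            - ∑ a, D t s a * V s) :=
          Finset.sum_congr rfl fun s _ =>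
            (Finset.sum_congr rfl fun a _ => hterm s a).trans (e1 s)
      _ = R t + γ * W (t + 1) - W t := by
          rw [Finset.sum_sub_distrib, Finset.sum_add_distrib, ← Finset.mul_sum, hW1 t]
  -- summability of the pointwise series
  have hbase : ∀ s a, Summable (fun t : ℕ => γ ^ t * D t s a) := by
    intro s a
    refine summable_of_geom_bound hγ0 hγ1 1
      (fun t => mul_nonneg (pow_nonneg hγ0 t) (hD0 t s a)) (fun t => ?_)
    rw [one_mul]
    calc γ ^ t * D t s a ≤ γ ^ t * 1 :=
          mul_le_mul_of_nonneg_left (hD1 t s a) (pow_nonneg hγ0 t)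
      _ = γ ^ t := mul_one _
  have hsum_sa : ∀ s a, Summable (fun t : ℕ => γ ^ t * D t s a * (Q s a - V s)) :=
    fun s a => (hbase s a).mul_right _
  -- rewrite the RHS double sum
  have hrhs : (∑ s, ∑ a, dvisit P π' γ μ' s a * (Q s a - V s))
      = (1 - γ) * ∑' t : ℕ, γ ^ t * (R t + γ * W (t + 1) - W t) := by
    have e1 : ∀ s a, dvisit P π' γ μ' s a * (Q s a - V s)
        = (1 - γ) * ∑' t : ℕ, γ ^ t * D t s a * (Q s a - V s) := by
      intro s a
      simp only [dvisit, hDdef]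
      rw [mul_assoc, ← tsum_mul_right]
    simp_rw [e1, ← Finset.mul_sum]
    congr 1
    have e2 : ∀ s, ∑ a, ∑' t : ℕ, γ ^ t * D t s a * (Q s a - V s)
        = ∑' t : ℕ, ∑ a, γ ^ t * D t s a * (Q s a - V s) :=
      fun s => (Summable.tsum_finsetSum fun a _ => hsum_sa s a).symm
    simp_rw [e2]
    rw [← Summable.tsum_finsetSum fun s _ => summable_sum fun a _ => hsum_sa s a]
    refine tsum_congr fun t => ?_
    rw [← hkey t, Finset.mul_sum]
    refine Finset.sum_congr rfl fun s _ => ?_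
    rw [Finset.mul_sum]
    exact Finset.sum_congr rfl fun a _ => by ring
  -- telescoping
  have htel : (∑' t : ℕ, γ ^ t * (R t + γ * W (t + 1) - W t))
      = (∑' t : ℕ, γ ^ t * R t) - W 0 := by
    have h1 : ∀ t : ℕ, γ ^ t * (R t + γ * W (t + 1) - W t)
        = (γ ^ t * R t + γ ^ (t + 1) * W (t + 1)) - γ ^ t * W t := by
      intro t; rw [pow_succ]; ring
    simp_rw [h1]
    rw [Summable.tsum_sub (hsumR.add hshiftW) hsumW, Summable.tsum_add hsumR hshiftW]
    have h2 : (∑' t : ℕ, γ ^ t * W t) = γ ^ 0 * W 0 + ∑' t : ℕ, γ ^ (t + 1) * W (t + 1) :=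
      Summable.tsum_eq_zero_add hsumW
    rw [pow_zero, one_mul] at h2
    have h3 : (∑' t : ℕ, γ ^ (t + 1) * W (t + 1)) = (∑' t : ℕ, γ ^ t * W t) - W 0 := by
      rw [h2]; ring
    rw [h3]; ring
  have hRS : (∑' t : ℕ, γ ^ t * R t) = ∑ s, ρ s * Vpi P r π' γ s := by
    have hv := value_eq_tsum hP hπ' hr hγ0 hγ1 μ'
    simp only [hRdef, hDdef]
    rw [hv, Fintype.sum_prod_type]
    refine Finset.sum_congr rfl fun s _ => ?_
    rw [Vpi, Finset.mul_sum]
    refine Finset.sum_congr rfl fun a _ => ?_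
    simp only [hμ'def]
    ring
  have hW0 : W 0 = ∑ s, ρ s * V s := by
    simp only [hWdef, hDdef, traj_zero]
    refine Finset.sum_congr rfl fun s _ => ?_
    have : ∀ a, μ' s a * V s = ρ s * V s * π' s a := by
      intro a; simp only [hμ'def]; ring
    simp_rw [this, ← Finset.mul_sum, (hπ' s).2, mul_one]
  rw [hrhs, htel, hRS, hW0]
  rw [← mul_assoc, one_div, inv_mul_cancel₀ (ne_of_gt h1γ), one_mul]
end

section
/- Regret bound for the NPG-style exponentiated update (Lemma on mirror-descent regret): Let S and A be finite nonempty sets, γ ∈ [0,1), T ≥ 1 an integer, and η = (1−γ)·√(1/T). Let ν^{(1)}, …, ν^{(T)} : S × A → ℝ satisfy ‖ν^{(t)}‖_∞ ≤ 1/(1−γ) for all t. Define policies π^{(t)} : S → Δ(A) by π^{(1)}(a|s) = 1/|A| and π^{(t+1)}(a|s) = π^{(t)}(a|s) exp(η ν^{(t)}(s,a)) / Σ_{a'∈A} π^{(t)}(a'|s) exp(η ν^{(t)}(s,a')). Define the centered functions ν̄^{(t)}(s,a) := ν^{(t)}(s,a) − E_{a'~π^{(t)}(·|s)}[ν^{(t)}(s,a')].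 Then for any probability distribution ρ on S × A (in the paper, ρ = d^{π*} for an optimal policy π*), Σ_{t=1}^T E_{(s,a)~ρ}[ν̄^{(t)}(s,a)] ≤ √T · (log|A| + 1) / (1−γ). -/
open Finset

section auxnpg

lemma exp_le_quadratic {x : ℝ} (hx : |x| ≤ 1) : Real.exp x ≤ 1 + x + x ^ 2 := by
  have h := Real.exp_bound hx (n := 2) (by norm_num)
  have h2 : ∑ m ∈ Finset.range 2, x ^ m / m.factorial = 1 + x := by
    simp [Finset.sum_range_succ]
  rw [h2] at h
  have h3 : |x| ^ 2 = x ^ 2 := sq_abs x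
  rw [h3] at h
  have h5 : (((Nat.succ 2 : ℕ) : ℝ) / (((Nat.factorial 2 : ℕ) : ℝ) * ((2:ℕ):ℝ))) = 3 / 4 := by
    norm_num [Nat.factorial]
  rw [h5] at h
  have := abs_le.mp h
  nlinarith [sq_nonneg x]

variable {S A : Type*} [Fintype S] [Fintype A] [Nonempty A]

/-- Unnormalized exponential weights. -/
noncomputable def Wt (ν : ℕ → S → A → ℝ) (η : ℝ) (t : ℕ) (s : S) (a : A) : ℝ :=
  Real.exp (η * ∑ u ∈ Finset.range t, ν u s a)

lemma Wt_pos (ν : ℕ → S → A → ℝ) (η : ℝ) (t : ℕ) (s : S) (a : A) : 0 < Wt ν η t s a :=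
  Real.exp_pos _

lemma Zt_pos (ν : ℕ → S → A → ℝ) (η : ℝ) (t : ℕ) (s : S) :
    0 < ∑ a, Wt ν η t s a :=
  Finset.sum_pos (fun a _ => Wt_pos ν η t s a) Finset.univ_nonempty

lemma Wt_succ (ν : ℕ → S → A → ℝ) (η : ℝ) (t : ℕ) (s : S) (a : A) :
    Wt ν η (t + 1) s a = Wt ν η t s a * Real.exp (η * ν t s a) := by
  simp [Wt, Finset.sum_range_succ, mul_add, Real.exp_add]

lemma npg_eq (ν : ℕ → S → A → ℝ) (η : ℝ) (t : ℕ) (s : S) (a : A) :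
    npg ν η t s a = Wt ν η t s a / ∑ a', Wt ν η t s a' := by
  induction t generalizing a with
  | zero => simp [npg, Wt, Finset.card_univ]
  | succ t ih =>
    have hZ : (∑ a', Wt ν η t s a') ≠ 0 := (Zt_pos ν η t s).ne'
    have hZ' : (∑ a', Wt ν η (t+1) s a') ≠ 0 := (Zt_pos ν η (t+1) s).ne'
    have e : ∀ a', npg ν η t s a' * Real.exp (η * ν t s a')
        = Wt ν η (t+1) s a' / ∑ b, Wt ν η t s b := by
      intro a'
      rw [ih, Wt_succ, div_mul_eq_mul_div]
    show npg ν η t s a * Real.exp (η * ν t s a) /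
        (∑ a', npg ν η t s a' * Real.exp (η * ν t s a')) = _
    simp only [e, ← Finset.sum_div]
    rw [div_div_div_eq, mul_comm (Wt ν η (t+1) s a), mul_div_mul_left _ _ hZ]

lemma npg_nonneg (ν : ℕ → S → A → ℝ) (η : ℝ) (t : ℕ) (s : S) (a : A) :
    0 ≤ npg ν η t s a := by
  rw [npg_eq]
  exact div_nonneg (Wt_pos ν η t s a).le (Zt_pos ν η t s).le

lemma npg_sum_one (ν : ℕ → S → A → ℝ) (η : ℝ) (t : ℕ) (s : S) :
    ∑ a, npg ν η t s a = 1 := by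
  simp only [npg_eq, ← Finset.sum_div]
  exact div_self (Zt_pos ν η t s).ne'

lemma step_le (ν : ℕ → S → A → ℝ) (η B : ℝ) (t : ℕ) (s : S)
    (hx : ∀ a, |η * ν t s a| ≤ 1) (hB : ∀ a, |η * ν t s a| ≤ B) :
    Real.log (∑ a, Wt ν η (t+1) s a) - Real.log (∑ a, Wt ν η t s a)
      ≤ (∑ a, npg ν η t s a * (η * ν t s a)) + B ^ 2 := by
  have hZ := Zt_pos ν η t s
  have hZ' := Zt_pos ν η (t+1) s
  have hratio : (∑ a, Wt ν η (t+1) s a) / (∑ a, Wt ν η t s a)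
      = ∑ a, npg ν η t s a * Real.exp (η * ν t s a) := by
    rw [Finset.sum_div]
    refine Finset.sum_congr rfl fun a _ => ?_
    rw [Wt_succ, npg_eq, div_mul_eq_mul_div]
  have hub : (∑ a, Wt ν η (t+1) s a) / (∑ a, Wt ν η t s a)
      ≤ 1 + (∑ a, npg ν η t s a * (η * ν t s a)) + B ^ 2 := by
    rw [hratio]
    have h1 : ∑ a, npg ν η t s a * Real.exp (η * ν t s a)
        ≤ ∑ a, npg ν η t s a * (1 + η * ν t s a + B ^ 2) := by
      refine Finset.sum_le_sum fun a _ => ?_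
      refine mul_le_mul_of_nonneg_left ?_ (npg_nonneg ν η t s a)
      have := exp_le_quadratic (hx a)
      have hsq : (η * ν t s a) ^ 2 ≤ B ^ 2 := by
        rw [← sq_abs]
        have hB0 : (0:ℝ) ≤ B := le_trans (abs_nonneg _) (hB a)
        exact pow_le_pow_left₀ (abs_nonneg _) (hB a) 2
      linarith
    have h2 : ∑ a, npg ν η t s a * (1 + η * ν t s a + B ^ 2)
        = 1 + (∑ a, npg ν η t s a * (η * ν t s a)) + B ^ 2 := by
      simp only [mul_add, mul_one, Finset.sum_add_distrib, npg_sum_one,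
        ← Finset.sum_mul, one_mul]
    linarith
  rw [← Real.log_div hZ'.ne' hZ.ne']
  have hlog := Real.log_le_sub_one_of_pos (div_pos hZ' hZ)
  linarith

lemma cum_bound (ν : ℕ → S → A → ℝ) (η B : ℝ) (T : ℕ) (s : S) (a : A)
    (hηpos : 0 < η)
    (hx : ∀ t < T, ∀ a, |η * ν t s a| ≤ 1) (hB : ∀ t < T, ∀ a, |η * ν t s a| ≤ B) :
    ∑ t ∈ Finset.range T, (ν t s a - ∑ a', npg ν η t s a' * ν t s a')
      ≤ (Real.log (Fintype.card A) + T * B ^ 2) / η := by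
  have htel : Real.log (∑ a', Wt ν η T s a') - Real.log (∑ a', Wt ν η 0 s a')
      = ∑ t ∈ Finset.range T,
        (Real.log (∑ a', Wt ν η (t+1) s a') - Real.log (∑ a', Wt ν η t s a')) :=
    (Finset.sum_range_sub (fun t => Real.log (∑ a', Wt ν η t s a')) T).symm
  have hZ0 : (∑ a', Wt ν η 0 s a') = (Fintype.card A : ℝ) := by
    simp [Wt, Finset.card_univ]
  have hsum : ∑ t ∈ Finset.range T,
      (Real.log (∑ a', Wt ν η (t+1) s a') - Real.log (∑ a', Wt ν η t s a'))
      ≤ ∑ t ∈ Finset.range T, ((∑ a', npg ν η t s a' * (η * ν t s a')) + B ^ 2) := by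
    refine Finset.sum_le_sum fun t ht => ?_
    exact step_le ν η B t s (hx t (Finset.mem_range.mp ht)) (hB t (Finset.mem_range.mp ht))
  have hlow : η * ∑ t ∈ Finset.range T, ν t s a ≤ Real.log (∑ a', Wt ν η T s a') := by
    have h1 : Wt ν η T s a ≤ ∑ a', Wt ν η T s a' :=
      Finset.single_le_sum (fun a' _ => (Wt_pos ν η T s a').le) (Finset.mem_univ a)
    have := Real.log_le_log (Wt_pos ν η T s a) h1
    rwa [Wt, Real.log_exp] at this
  have hup : ∑ t ∈ Finset.range T, ((∑ a', npg ν η t s a' * (η * ν t s a')) + B ^ 2)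
      = η * (∑ t ∈ Finset.range T, ∑ a', npg ν η t s a' * ν t s a') + T * B ^ 2 := by
    rw [Finset.sum_add_distrib, Finset.sum_const, Finset.card_range, nsmul_eq_mul,
      Finset.mul_sum]
    congr 1
    refine Finset.sum_congr rfl fun t _ => ?_
    rw [Finset.mul_sum]
    exact Finset.sum_congr rfl fun a' _ => by ring
  rw [le_div_iff₀ hηpos, Finset.sum_sub_distrib]
  have key : η * ∑ t ∈ Finset.range T, ν t s a
      ≤ Real.log (Fintype.card A) +
        (η * (∑ t ∈ Finset.range T, ∑ a', npg ν η t s a' * ν t s a') + T * B ^ 2) := by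
    calc η * ∑ t ∈ Finset.range T, ν t s a
        ≤ Real.log (∑ a', Wt ν η T s a') := hlow
      _ = Real.log (∑ a', Wt ν η 0 s a') + ∑ t ∈ Finset.range T,
          (Real.log (∑ a', Wt ν η (t+1) s a') - Real.log (∑ a', Wt ν η t s a')) := by
          rw [← htel]; ring
      _ ≤ _ := by rw [hZ0]; linarith [hsum, hup.le, hup.ge]
  nlinarith [key]

end auxnpg

/-- **Regret bound for the NPG-style exponentiated update.** With `η = (1−γ)√(1/T)`,
`‖ν^{(t)}‖_∞ ≤ 1/(1−γ)` for all `t < T`, policies `π^{(t)} = npg ν η t` (uniform at `t = 0`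
and exponentiated updates afterwards), and centered functions
`ν̄^{(t)}(s,a) = ν^{(t)}(s,a) − E_{a' ~ π^{(t)}(·|s)}[ν^{(t)}(s,a')]`, for any distribution
`ρ` on `S × A` we have `∑_{t<T} E_ρ[ν̄^{(t)}] ≤ √T (log|A| + 1)/(1−γ)`. -/
theorem npg_regret_bound
    {S A : Type*} [Fintype S] [Fintype A] [Nonempty S] [Nonempty A]
    (γ : ℝ) (hγ0 : 0 ≤ γ) (hγ1 : γ < 1)
    (T : ℕ) (hT : 1 ≤ T)
    (η : ℝ) (hη : η = (1 - γ) * Real.sqrt (1 / (T : ℝ)))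
    (ν : ℕ → S → A → ℝ) (hν : ∀ t < T, ∀ s a, |ν t s a| ≤ 1 / (1 - γ))
    (ρ : S → A → ℝ) (hρ : IsDist2 ρ) :
    ∑ t ∈ Finset.range T, ∑ s, ∑ a, ρ s a *
        (ν t s a - ∑ a', npg ν η t s a' * ν t s a')
      ≤ Real.sqrt (T : ℝ) * (Real.log (Fintype.card A) + 1) / (1 - γ) := by
  have h1γ : (0:ℝ) < 1 - γ := by linarith
  have hT0 : (0:ℝ) < (T:ℝ) := by exact_mod_cast Nat.lt_of_lt_of_le Nat.zero_lt_one hT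
  have hsT : (0:ℝ) < Real.sqrt T := Real.sqrt_pos.mpr hT0
  have hinv : (0:ℝ) < 1 / (T:ℝ) := by positivity
  have hηpos : 0 < η := by
    rw [hη]; exact mul_pos h1γ (Real.sqrt_pos.mpr hinv)
  set B : ℝ := Real.sqrt (1 / (T:ℝ)) with hBdef
  have hsqrtinv : B = 1 / Real.sqrt T := by
    rw [hBdef, one_div, one_div, Real.sqrt_inv]
  have habs : ∀ t < T, ∀ s a, |η * ν t s a| ≤ B := by
    intro t ht s a
    rw [abs_mul, abs_of_nonneg hηpos.le]
    calc η * |ν t s a| ≤ η * (1 / (1 - γ)) :=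
          mul_le_mul_of_nonneg_left (hν t ht s a) hηpos.le
      _ = B := by rw [hη]; field_simp
  have hone : ∀ t < T, ∀ s a, |η * ν t s a| ≤ 1 := by
    intro t ht s a
    refine (habs t ht s a).trans ?_
    rw [hBdef]
    exact Real.sqrt_le_one.mpr (by rw [div_le_one hT0]; exact_mod_cast hT)
  set C : ℝ := Real.sqrt (T : ℝ) * (Real.log (Fintype.card A) + 1) / (1 - γ) with hC
  have key : ∀ s a, ∑ t ∈ Finset.range T,
      (ν t s a - ∑ a', npg ν η t s a' * ν t s a') ≤ C := by
    intro s a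
    have h := cum_bound ν η B T s a hηpos (fun t ht => hone t ht s) (fun t ht => habs t ht s)
    refine h.trans_eq ?_
    have hTB : (T:ℝ) * B ^ 2 = 1 := by
      rw [hBdef, Real.sq_sqrt hinv.le]
      field_simp
    rw [hTB, hC, hη, hsqrtinv]
    field_simp
  have reorder : ∑ t ∈ Finset.range T, ∑ s, ∑ a, ρ s a *
        (ν t s a - ∑ a', npg ν η t s a' * ν t s a')
      = ∑ s, ∑ a, ρ s a * ∑ t ∈ Finset.range T,
        (ν t s a - ∑ a', npg ν η t s a' * ν t s a') := by
    rw [Finset.sum_comm]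
    refine Finset.sum_congr rfl fun s _ => ?_
    rw [Finset.sum_comm]
    refine Finset.sum_congr rfl fun a _ => ?_
    rw [Finset.mul_sum]
  rw [reorder]
  calc ∑ s, ∑ a, ρ s a * ∑ t ∈ Finset.range T,
        (ν t s a - ∑ a', npg ν η t s a' * ν t s a')
      ≤ ∑ s, ∑ a, ρ s a * C := by
        exact Finset.sum_le_sum fun s _ => Finset.sum_le_sum fun a _ =>
          mul_le_mul_of_nonneg_left (key s a) (hρ.1 s a)
    _ = (∑ s, ∑ a, ρ s a) * C := by
        rw [Finset.sum_mul]
        exact Finset.sum_congr rfl fun s _ => by rw [Finset.sum_mul]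
    _ = C := by rw [hρ.2, one_mul]
end

section
/- Hybrid-critic approximation error bound (Lemma 6 / lemma:7 of the paper, stated for an arbitrary policy): Suppose μ(s,a) > 0 for all (s,a) and write μ_min := min_{(s,a)} μ(s,a). Let π be a policy, α ∈ [0,1], Q_tar : S × A → ℝ and g : S × A → ℝ arbitrary functions, and set f(s,a) := (1−α)·Q_tar(s,a) + α·g(s,a). Then E_{(s,a)~d^π}[ |f(s,a) − Q^π(s,a)| ] ≤ (1/((1−γ)² μ_min)) · [ (1−α) · E_{(s,a)~d^π}[ε_td(s,a; Q_tar, π)] + α · E_{(s,a)~d^π}[ε_cd(s,a; g, π)] ], where ε_td(s,a; Q_tar, π) := |Q_tar(s,a) − r(s,a) − γ E_{s'~P(·|s,a), a'~π(·|s')}[Q_tar(s',a')]| and ε_cd(s,a; g, π) := |g(s,a) − r(s,a) − γ E_{s'~P(·|s,a), a'~π(·|s')}[g(s',a')]|. -/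
open Finset

section Aux

variable {S A : Type*} [Fintype S] [Fintype A]

lemma IsDist2.nonneg {p : S → A → ℝ} (hp : IsDist2 p) (s : S) (a : A) : 0 ≤ p s a := hp.1 s a

lemma IsDist2.le_one {p : S → A → ℝ} (hp : IsDist2 p) (s : S) (a : A) : p s a ≤ 1 := by
  have h1 : p s a ≤ ∑ a', p s a' :=
    Finset.single_le_sum (fun a' _ => hp.1 s a') (Finset.mem_univ a)
  have h2 : ∑ a', p s a' ≤ ∑ s', ∑ a', p s' a' :=
    Finset.single_le_sum (fun s' _ => Finset.sum_nonneg fun a' _ => hp.1 s' a')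
      (Finset.mem_univ s)
  linarith [hp.2]

lemma isDist2_dirac [DecidableEq S] [DecidableEq A] (s : S) (a : A) : IsDist2 (dirac s a) := by
  constructor
  · intro s' a'; unfold dirac; split_ifs <;> norm_num
  · simp [dirac, ite_and]

lemma isDist2_step {P : S → A → S → ℝ} {π : S → A → ℝ} {d : S → A → ℝ}
    (hP : IsKernel P) (hπ : IsPolicy π) (hd : IsDist2 d) : IsDist2 (step P π d) := by
  constructor
  · intro s' a'
    refine mul_nonneg (Finset.sum_nonneg fun s _ => Finset.sum_nonneg fun a _ =>
      mul_nonneg (hd.1 s a) ((hP s a).1 s')) ((hπ s').1 a')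
  · have : ∀ s' : S, ∑ a', step P π d s' a' = ∑ s, ∑ a, d s a * P s a s' := by
      intro s'
      rw [show ∑ a', step P π d s' a' = (∑ s, ∑ a, d s a * P s a s') * ∑ a', π s' a' by
        simp [step, Finset.mul_sum], (hπ s').2, mul_one]
    rw [Finset.sum_congr rfl fun s' _ => this s', Finset.sum_comm]
    have : ∀ s : S, ∑ s', ∑ a, d s a * P s a s' = ∑ a, d s a := by
      intro s
      rw [Finset.sum_comm]
      refine Finset.sum_congr rfl fun a _ => ?_
      rw [← Finset.mul_sum, (hP s a).2, mul_one]
    rw [Finset.sum_congr rfl fun s _ => this s, hd.2]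

lemma isDist2_traj {P : S → A → S → ℝ} {π : S → A → ℝ} {μ : S → A → ℝ}
    (hP : IsKernel P) (hπ : IsPolicy π) (hμ : IsDist2 μ) (t : ℕ) :
    IsDist2 (traj P π μ t) := by
  induction t with
  | zero => simpa [traj] using hμ
  | succ t ih =>
    have : traj P π μ (t + 1) = step P π (traj P π μ t) := by
      simp [traj, Function.iterate_succ_apply']
    rw [this]; exact isDist2_step hP hπ ih

lemma summable_geom_traj {P : S → A → S → ℝ} {π : S → A → ℝ} {μ : S → A → ℝ} {γ : ℝ}
    (hP : IsKernel P) (hπ : IsPolicy π) (hμ : IsDist2 μ)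
    (hγ0 : 0 ≤ γ) (hγ1 : γ < 1) (s : S) (a : A) :
    Summable (fun t => γ ^ t * traj P π μ t s a) := by
  refine Summable.of_nonneg_of_le
    (fun t => mul_nonneg (pow_nonneg hγ0 t) ((isDist2_traj hP hπ hμ t).1 s a))
    (fun t => ?_) (summable_geometric_of_lt_one hγ0 hγ1)
  calc γ ^ t * traj P π μ t s a ≤ γ ^ t * 1 := by
        exact mul_le_mul_of_nonneg_left ((isDist2_traj hP hπ hμ t).le_one s a)
          (pow_nonneg hγ0 t)
    _ = γ ^ t := mul_one _

lemma sum4_swap (F : S → A → S → A → ℝ) :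
    ∑ s, ∑ a, ∑ u, ∑ b, F s a u b = ∑ u, ∑ b, ∑ s, ∑ a, F s a u b := by
  calc ∑ s, ∑ a, ∑ u, ∑ b, F s a u b
      = ∑ s, ∑ u, ∑ a, ∑ b, F s a u b :=
        Finset.sum_congr rfl fun s _ => Finset.sum_comm
    _ = ∑ u, ∑ s, ∑ a, ∑ b, F s a u b := Finset.sum_comm
    _ = ∑ u, ∑ s, ∑ b, ∑ a, F s a u b :=
        Finset.sum_congr rfl fun u _ => Finset.sum_congr rfl fun s _ => Finset.sum_comm
    _ = ∑ u, ∑ b, ∑ s, ∑ a, F s a u b :=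
        Finset.sum_congr rfl fun u _ => Finset.sum_comm

/-- linearity of the trajectory distribution in the initial distribution -/
lemma traj_linear [DecidableEq S] [DecidableEq A]
    {P : S → A → S → ℝ} {π : S → A → ℝ} (d : S → A → ℝ) (t : ℕ) (x : S) (y : A) :
    traj P π d t x y = ∑ s, ∑ a, d s a * traj P π (dirac s a) t x y := by
  induction t generalizing d with
  | zero =>
    simp [traj, dirac, ite_and, mul_comm]
  | succ t ih =>
    have hstep : ∀ (e : S → A → ℝ), traj P π e (t + 1) x y = traj P π (step P π e) t x y := by
      intro e; simp [traj, Function.iterate_succ_apply]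
    have hrw : ∀ s a, traj P π (dirac s a) (t + 1) x y
        = ∑ u, ∑ b, P s a u * π u b * traj P π (dirac u b) t x y := by
      intro s a
      rw [hstep, ih (step P π (dirac s a))]
      refine Finset.sum_congr rfl fun u _ => Finset.sum_congr rfl fun b _ => ?_
      congr 1
      simp [step, dirac, ite_and]
    have key : ∑ u, ∑ b, (∑ s, ∑ a, d s a * P s a u) * π u b * traj P π (dirac u b) t x y
        = ∑ s, ∑ a, d s a * ∑ u, ∑ b, P s a u * π u b * traj P π (dirac u b) t x y := by
      simp_rw [Finset.mul_sum, Finset.sum_mul, mul_assoc]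
      exact (sum4_swap _).symm
    calc traj P π d (t + 1) x y
        = traj P π (step P π d) t x y := hstep d
      _ = ∑ u, ∑ b, step P π d u b * traj P π (dirac u b) t x y := ih _
      _ = ∑ u, ∑ b, (∑ s, ∑ a, d s a * P s a u) * π u b * traj P π (dirac u b) t x y :=
          Finset.sum_congr rfl fun u _ => Finset.sum_congr rfl fun b _ => by simp [step]
      _ = ∑ s, ∑ a, d s a * ∑ u, ∑ b, P s a u * π u b * traj P π (dirac u b) t x y := key
      _ = ∑ s, ∑ a, d s a * traj P π (dirac s a) (t + 1) x y :=
          Finset.sum_congr rfl fun s _ => Finset.sum_congr rfl fun a _ => by rw [hrw s a]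

lemma traj_dirac_succ [DecidableEq S] [DecidableEq A]
    {P : S → A → S → ℝ} {π : S → A → ℝ} (s : S) (a : A) (t : ℕ) (x : S) (y : A) :
    traj P π (dirac s a) (t + 1) x y
      = ∑ u, ∑ b, P s a u * π u b * traj P π (dirac u b) t x y := by
  have hstep : traj P π (dirac s a) (t + 1) x y
      = traj P π (step P π (dirac s a)) t x y := by
    simp [traj, Function.iterate_succ_apply]
  rw [hstep, traj_linear]
  refine Finset.sum_congr rfl fun u _ => Finset.sum_congr rfl fun b _ => ?_
  congr 1
  simp [step, dirac, ite_and]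

/-- expected reward at time `t` starting from distribution `d` -/
noncomputable def Rw (P : S → A → S → ℝ) (π : S → A → ℝ) (r : S → A → ℝ)
    (d : S → A → ℝ) (t : ℕ) : ℝ :=
  ∑ s', ∑ a', traj P π d t s' a' * r s' a'

lemma Rw_nonneg {P : S → A → S → ℝ} {π : S → A → ℝ} {r : S → A → ℝ} {d : S → A → ℝ}
    (hP : IsKernel P) (hπ : IsPolicy π) (hd : IsDist2 d)
    (hr : ∀ s a, 0 ≤ r s a) (t : ℕ) : 0 ≤ Rw P π r d t :=
  Finset.sum_nonneg fun s' _ => Finset.sum_nonneg fun a' _ =>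
    mul_nonneg ((isDist2_traj hP hπ hd t).1 s' a') (hr s' a')

lemma Rw_le_one {P : S → A → S → ℝ} {π : S → A → ℝ} {r : S → A → ℝ} {d : S → A → ℝ}
    (hP : IsKernel P) (hπ : IsPolicy π) (hd : IsDist2 d)
    (hr : ∀ s a, r s a ≤ 1) (t : ℕ) : Rw P π r d t ≤ 1 := by
  have h : Rw P π r d t ≤ ∑ s', ∑ a', traj P π d t s' a' := by
    refine Finset.sum_le_sum fun s' _ => Finset.sum_le_sum fun a' _ => ?_
    calc traj P π d t s' a' * r s' a' ≤ traj P π d t s' a' * 1 :=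
          mul_le_mul_of_nonneg_left (hr s' a') ((isDist2_traj hP hπ hd t).1 s' a')
      _ = traj P π d t s' a' := mul_one _
  calc Rw P π r d t ≤ ∑ s', ∑ a', traj P π d t s' a' := h
    _ = 1 := (isDist2_traj hP hπ hd t).2

lemma summable_Rw {P : S → A → S → ℝ} {π : S → A → ℝ} {r : S → A → ℝ} {d : S → A → ℝ}
    {γ : ℝ} (hP : IsKernel P) (hπ : IsPolicy π) (hd : IsDist2 d)
    (hr : ∀ s a, 0 ≤ r s a ∧ r s a ≤ 1) (hγ0 : 0 ≤ γ) (hγ1 : γ < 1) :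
    Summable (fun t => γ ^ t * Rw P π r d t) := by
  refine Summable.of_nonneg_of_le
    (fun t => mul_nonneg (pow_nonneg hγ0 t) (Rw_nonneg hP hπ hd (fun s a => (hr s a).1) t))
    (fun t => ?_) (summable_geometric_of_lt_one hγ0 hγ1)
  calc γ ^ t * Rw P π r d t ≤ γ ^ t * 1 :=
        mul_le_mul_of_nonneg_left (Rw_le_one hP hπ hd (fun s a => (hr s a).2) t)
          (pow_nonneg hγ0 t)
    _ = γ ^ t := mul_one _

lemma Rw_dirac_succ [DecidableEq S] [DecidableEq A]
    {P : S → A → S → ℝ} {π : S → A → ℝ} {r : S → A → ℝ} (s : S) (a : A) (t : ℕ) :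
    Rw P π r (dirac s a) (t + 1)
      = ∑ u, ∑ b, P s a u * π u b * Rw P π r (dirac u b) t := by
  unfold Rw
  simp_rw [traj_dirac_succ, Finset.sum_mul, Finset.mul_sum, mul_assoc]
  exact sum4_swap _

lemma Qpi_eq [DecidableEq S] [DecidableEq A]
    (P : S → A → S → ℝ) (r : S → A → ℝ) (π : S → A → ℝ) (γ : ℝ) (s : S) (a : A) :
    Qpi P r π γ s a = ∑' t, γ ^ t * Rw P π r (dirac s a) t := rfl

lemma Qpi_bellman [DecidableEq S] [DecidableEq A]
    {P : S → A → S → ℝ} {π : S → A → ℝ} {r : S → A → ℝ} {γ : ℝ}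
    (hP : IsKernel P) (hπ : IsPolicy π)
    (hr : ∀ s a, 0 ≤ r s a ∧ r s a ≤ 1) (hγ0 : 0 ≤ γ) (hγ1 : γ < 1) (s : S) (a : A) :
    Qpi P r π γ s a
      = r s a + γ * ∑ s', P s a s' * ∑ a', π s' a' * Qpi P r π γ s' a' := by
  have hsum : ∀ u b, Summable (fun t => γ ^ t * Rw P π r (dirac u b) t) :=
    fun u b => summable_Rw hP hπ (isDist2_dirac u b) hr hγ0 hγ1
  rw [Qpi_eq, Summable.tsum_eq_zero_add (hsum s a)]
  congr 1
  · simp [Rw, traj, dirac, ite_and]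
  · have h1 : ∀ t : ℕ, γ ^ (t + 1) * Rw P π r (dirac s a) (t + 1)
        = ∑ u, ∑ b, P s a u * (π u b * (γ * (γ ^ t * Rw P π r (dirac u b) t))) := by
      intro t
      rw [Rw_dirac_succ, Finset.mul_sum]
      refine Finset.sum_congr rfl fun u _ => ?_
      rw [Finset.mul_sum]
      refine Finset.sum_congr rfl fun b _ => ?_
      rw [pow_succ]; ring
    calc ∑' t, γ ^ (t + 1) * Rw P π r (dirac s a) (t + 1)
        = ∑' t, ∑ u, ∑ b, P s a u * (π u b * (γ * (γ ^ t * Rw P π r (dirac u b) t))) :=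
          tsum_congr h1
      _ = ∑ u, ∑' t, ∑ b, P s a u * (π u b * (γ * (γ ^ t * Rw P π r (dirac u b) t))) := by
          refine Summable.tsum_finsetSum fun u _ => summable_sum fun b _ => ?_
          exact (((hsum u b).mul_left γ).mul_left (π u b)).mul_left (P s a u)
      _ = ∑ u, ∑ b, ∑' t, P s a u * (π u b * (γ * (γ ^ t * Rw P π r (dirac u b) t))) := by
          refine Finset.sum_congr rfl fun u _ => Summable.tsum_finsetSum fun b _ => ?_
          exact (((hsum u b).mul_left γ).mul_left (π u b)).mul_left (P s a u)
      _ = ∑ u, ∑ b, P s a u * (π u b * (γ * Qpi P r π γ u b)) := by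
          refine Finset.sum_congr rfl fun u _ => Finset.sum_congr rfl fun b _ => ?_
          rw [Qpi_eq, ← tsum_mul_left, ← tsum_mul_left, ← tsum_mul_left]
      _ = γ * ∑ s', P s a s' * ∑ a', π s' a' * Qpi P r π γ s' a' := by
          rw [Finset.mul_sum]
          refine Finset.sum_congr rfl fun u _ => ?_
          rw [Finset.mul_sum, Finset.mul_sum]
          refine Finset.sum_congr rfl fun b _ => ?_
          ring

lemma dvisit_nonneg {P : S → A → S → ℝ} {π : S → A → ℝ} {μ : S → A → ℝ} {γ : ℝ}
    (hP : IsKernel P) (hπ : IsPolicy π) (hμ : IsDist2 μ)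
    (hγ0 : 0 ≤ γ) (hγ1 : γ < 1) (s : S) (a : A) : 0 ≤ dvisit P π γ μ s a :=
  mul_nonneg (by linarith) (tsum_nonneg fun t =>
    mul_nonneg (pow_nonneg hγ0 t) ((isDist2_traj hP hπ hμ t).1 s a))

lemma dvisit_ge {P : S → A → S → ℝ} {π : S → A → ℝ} {μ : S → A → ℝ} {γ : ℝ}
    (hP : IsKernel P) (hπ : IsPolicy π) (hμ : IsDist2 μ)
    (hγ0 : 0 ≤ γ) (hγ1 : γ < 1) (s : S) (a : A) :
    (1 - γ) * μ s a ≤ dvisit P π γ μ s a := by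
  unfold dvisit
  refine mul_le_mul_of_nonneg_left ?_ (by linarith)
  have h := Summable.le_tsum (summable_geom_traj hP hπ hμ hγ0 hγ1 s a) 0
    (fun t _ => mul_nonneg (pow_nonneg hγ0 t) ((isDist2_traj hP hπ hμ t).1 s a))
  simpa [traj] using h

lemma dvisit_sum_one {P : S → A → S → ℝ} {π : S → A → ℝ} {μ : S → A → ℝ} {γ : ℝ}
    (hP : IsKernel P) (hπ : IsPolicy π) (hμ : IsDist2 μ)
    (hγ0 : 0 ≤ γ) (hγ1 : γ < 1) :
    ∑ s, ∑ a, dvisit P π γ μ s a = 1 := by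
  have hsm : ∀ s a, Summable (fun t => γ ^ t * traj P π μ t s a) :=
    fun s a => summable_geom_traj hP hπ hμ hγ0 hγ1 s a
  have hswap : ∑ s, ∑ a, ∑' t, γ ^ t * traj P π μ t s a
      = ∑' t, ∑ s, ∑ a, γ ^ t * traj P π μ t s a := by
    rw [Summable.tsum_finsetSum fun s _ => summable_sum fun a _ => hsm s a]
    exact Finset.sum_congr rfl fun s _ => (Summable.tsum_finsetSum fun a _ => hsm s a).symm
  have hne : (1 : ℝ) - γ ≠ 0 := by linarith
  calc ∑ s, ∑ a, dvisit P π γ μ s a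
      = (1 - γ) * ∑ s, ∑ a, ∑' t, γ ^ t * traj P π μ t s a := by
        simp [dvisit, Finset.mul_sum]
    _ = (1 - γ) * ∑' t, γ ^ t := by
        rw [hswap]
        congr 1
        refine tsum_congr fun t => ?_
        simp_rw [← Finset.mul_sum]
        rw [(isDist2_traj hP hπ hμ t).2, mul_one]
    _ = 1 := by
        rw [tsum_geometric_of_lt_one hγ0 hγ1]
        field_simp

lemma abs_sub_Qpi_le [DecidableEq S] [DecidableEq A] [Nonempty S] [Nonempty A]
    {P : S → A → S → ℝ} {π : S → A → ℝ} {r : S → A → ℝ} {γ : ℝ}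
    (hP : IsKernel P) (hπ : IsPolicy π)
    (hr : ∀ s a, 0 ≤ r s a ∧ r s a ≤ 1) (hγ0 : 0 ≤ γ) (hγ1 : γ < 1)
    (F : S → A → ℝ) (s : S) (a : A) :
    |F s a - Qpi P r π γ s a| ≤ bellErr P r γ π F s a
      + γ * Finset.univ.sup' Finset.univ_nonempty
          (fun p : S × A => |F p.1 p.2 - Qpi P r π γ p.1 p.2|) := by
  set M := Finset.univ.sup' Finset.univ_nonempty
    (fun p : S × A => |F p.1 p.2 - Qpi P r π γ p.1 p.2|) with hMdef
  have hMle : ∀ u b, |F u b - Qpi P r π γ u b| ≤ M := by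
    intro u b
    rw [hMdef]
    exact Finset.le_sup' (fun p : S × A => |F p.1 p.2 - Qpi P r π γ p.1 p.2|)
      (Finset.mem_univ (u, b))
  have hQb := Qpi_bellman hP hπ hr hγ0 hγ1 s a
  have key : F s a - Qpi P r π γ s a
      = (F s a - r s a - γ * ∑ s', P s a s' * ∑ a', π s' a' * F s' a')
        + γ * ∑ s', P s a s' * ∑ a', π s' a' * (F s' a' - Qpi P r π γ s' a') := by
    have hlin : ∑ s', P s a s' * ∑ a', π s' a' * (F s' a' - Qpi P r π γ s' a')
        = (∑ s', P s a s' * ∑ a', π s' a' * F s' a')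
          - ∑ s', P s a s' * ∑ a', π s' a' * Qpi P r π γ s' a' := by
      rw [← Finset.sum_sub_distrib]
      refine Finset.sum_congr rfl fun s' _ => ?_
      rw [← mul_sub, ← Finset.sum_sub_distrib]
      congr 1
      exact Finset.sum_congr rfl fun a' _ => by ring
    rw [hlin, hQb]; ring
  rw [key]
  refine (abs_add_le _ _).trans (add_le_add le_rfl ?_)
  rw [abs_mul, abs_of_nonneg hγ0]
  refine mul_le_mul_of_nonneg_left ?_ hγ0
  have hinner : ∀ s', |P s a s' * ∑ a', π s' a' * (F s' a' - Qpi P r π γ s' a')|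
      ≤ P s a s' * M := by
    intro s'
    rw [abs_mul, abs_of_nonneg ((hP s a).1 s')]
    refine mul_le_mul_of_nonneg_left ?_ ((hP s a).1 s')
    refine (Finset.abs_sum_le_sum_abs _ _).trans ?_
    calc ∑ a', |π s' a' * (F s' a' - Qpi P r π γ s' a')|
        ≤ ∑ a', π s' a' * M := by
          refine Finset.sum_le_sum fun a' _ => ?_
          rw [abs_mul, abs_of_nonneg ((hπ s').1 a')]
          exact mul_le_mul_of_nonneg_left (hMle s' a') ((hπ s').1 a')
      _ = M := by rw [← Finset.sum_mul, (hπ s').2, one_mul]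
  calc |∑ s', P s a s' * ∑ a', π s' a' * (F s' a' - Qpi P r π γ s' a')|
      ≤ ∑ s', |P s a s' * ∑ a', π s' a' * (F s' a' - Qpi P r π γ s' a')| :=
        Finset.abs_sum_le_sum_abs _ _
    _ ≤ ∑ s', P s a s' * M := Finset.sum_le_sum fun s' _ => hinner s'
    _ = M := by rw [← Finset.sum_mul, (hP s a).2, one_mul]

end Aux
/-- **Hybrid-critic approximation error bound.** If `μ(s,a) > 0` everywhere with
`μ_min = min_{(s,a)} μ(s,a)`, then for any policy `π`, `α ∈ [0,1]` and arbitrary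
`Q_tar, g : S × A → ℝ`, the hybrid critic `f = (1−α) Q_tar + α g` satisfies
`E_{d^π}[|f − Q^π|] ≤ (1/((1−γ)² μ_min)) ((1−α) E_{d^π}[ε_td] + α E_{d^π}[ε_cd])`. -/
theorem hybrid_critic_error_bound
    {S A : Type*} [Fintype S] [Fintype A] [Nonempty S] [Nonempty A]
    [DecidableEq S] [DecidableEq A]
    (P : S → A → S → ℝ) (r : S → A → ℝ) (γ : ℝ) (μ : S → A → ℝ)
    (hP : IsKernel P) (hr : ∀ s a, 0 ≤ r s a ∧ r s a ≤ 1)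
    (hγ0 : 0 ≤ γ) (hγ1 : γ < 1) (hμ : IsDist2 μ)
    (hμpos : ∀ s a, 0 < μ s a)
    (μmin : ℝ)
    (hμmin : μmin = Finset.univ.inf' Finset.univ_nonempty (fun p : S × A => μ p.1 p.2))
    (π : S → A → ℝ) (hπ : IsPolicy π)
    (α : ℝ) (hα0 : 0 ≤ α) (hα1 : α ≤ 1)
    (Qtar g : S → A → ℝ) :
    ∑ s, ∑ a, dvisit P π γ μ s a *
        |((1 - α) * Qtar s a + α * g s a) - Qpi P r π γ s a|
      ≤ (1 / ((1 - γ) ^ 2 * μmin)) *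
          ((1 - α) * ∑ s, ∑ a, dvisit P π γ μ s a * bellErr P r γ π Qtar s a +
            α * ∑ s, ∑ a, dvisit P π γ μ s a * bellErr P r γ π g s a) := by
  have hγpos : (0:ℝ) < 1 - γ := by linarith
  have hα1' : (0:ℝ) ≤ 1 - α := by linarith
  have hμminle : ∀ s a, μmin ≤ μ s a := by
    intro s a
    rw [hμmin]
    exact Finset.inf'_le _ (Finset.mem_univ (s, a))
  have hμminpos : 0 < μmin := by
    rw [hμmin]
    obtain ⟨p, -, hp⟩ := Finset.exists_mem_eq_inf' Finset.univ_nonempty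
      (fun p : S × A => μ p.1 p.2)
    rw [hp]; exact hμpos p.1 p.2
  -- the hybrid critic
  set F : S → A → ℝ := fun s a => (1 - α) * Qtar s a + α * g s a with hF
  set M := Finset.univ.sup' Finset.univ_nonempty
    (fun p : S × A => |F p.1 p.2 - Qpi P r π γ p.1 p.2|) with hMdef
  have hMle : ∀ u b, |F u b - Qpi P r π γ u b| ≤ M := by
    intro u b
    rw [hMdef]
    exact Finset.le_sup' (fun p : S × A => |F p.1 p.2 - Qpi P r π γ p.1 p.2|)
      (Finset.mem_univ (u, b))
  -- (a) the LHS is at most M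
  have hLHS : ∑ s, ∑ a, dvisit P π γ μ s a * |F s a - Qpi P r π γ s a| ≤ M := by
    calc ∑ s, ∑ a, dvisit P π γ μ s a * |F s a - Qpi P r π γ s a|
        ≤ ∑ s, ∑ a, dvisit P π γ μ s a * M :=
          Finset.sum_le_sum fun s _ => Finset.sum_le_sum fun a _ =>
            mul_le_mul_of_nonneg_left (hMle s a) (dvisit_nonneg hP hπ hμ hγ0 hγ1 s a)
      _ = (∑ s, ∑ a, dvisit P π γ μ s a) * M := by
          rw [Finset.sum_mul]
          exact Finset.sum_congr rfl fun s _ => by rw [Finset.sum_mul]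
      _ = M := by rw [dvisit_sum_one hP hπ hμ hγ0 hγ1, one_mul]
  -- pointwise bound on the Bellman error of the hybrid critic
  have hbF : ∀ s a, bellErr P r γ π F s a
      ≤ (1 - α) * bellErr P r γ π Qtar s a + α * bellErr P r γ π g s a := by
    intro s a
    have hsplit : F s a - r s a - γ * ∑ s', P s a s' * ∑ a', π s' a' * F s' a'
        = (1 - α) * (Qtar s a - r s a - γ * ∑ s', P s a s' * ∑ a', π s' a' * Qtar s' a')
          + α * (g s a - r s a - γ * ∑ s', P s a s' * ∑ a', π s' a' * g s' a') := by
      have h1 : ∀ s', ∑ a', π s' a' * F s' a'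
          = (1 - α) * ∑ a', π s' a' * Qtar s' a' + α * ∑ a', π s' a' * g s' a' := by
        intro s'
        rw [Finset.mul_sum, Finset.mul_sum, ← Finset.sum_add_distrib]
        exact Finset.sum_congr rfl fun a' _ => by simp only [hF]; ring
      have h2 : ∑ s', P s a s' * ∑ a', π s' a' * F s' a'
          = (1 - α) * (∑ s', P s a s' * ∑ a', π s' a' * Qtar s' a')
            + α * ∑ s', P s a s' * ∑ a', π s' a' * g s' a' := by
        rw [Finset.mul_sum, Finset.mul_sum, ← Finset.sum_add_distrib]
        exact Finset.sum_congr rfl fun s' _ => by rw [h1]; ring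
      rw [h2]; simp only [hF]; ring
    unfold bellErr
    rw [hsplit]
    refine (abs_add_le _ _).trans ?_
    rw [abs_mul, abs_mul, abs_of_nonneg hα1', abs_of_nonneg hα0]
  -- (b) contraction: (1-γ) * M is at most the hybrid Bellman error at the argmax
  obtain ⟨p₀, -, hp₀⟩ := Finset.exists_mem_eq_sup' Finset.univ_nonempty
    (fun p : S × A => |F p.1 p.2 - Qpi P r π γ p.1 p.2|)
  have hMeq : M = |F p₀.1 p₀.2 - Qpi P r π γ p₀.1 p₀.2| := by rw [hMdef, hp₀]
  have hcontr := abs_sub_Qpi_le hP hπ hr hγ0 hγ1 F p₀.1 p₀.2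
  rw [← hMdef, ← hMeq] at hcontr
  have hE0 : ∀ s a, 0 ≤ (1 - α) * bellErr P r γ π Qtar s a + α * bellErr P r γ π g s a :=
    fun s a => add_nonneg (mul_nonneg hα1' (abs_nonneg _)) (mul_nonneg hα0 (abs_nonneg _))
  have hb : (1 - γ) * M
      ≤ (1 - α) * bellErr P r γ π Qtar p₀.1 p₀.2 + α * bellErr P r γ π g p₀.1 p₀.2 := by
    have := hbF p₀.1 p₀.2
    nlinarith [hcontr]
  -- (c) the argmax Bellman error is controlled by the expectation
  have hTlower : (1 - γ) * μmin *
      ((1 - α) * bellErr P r γ π Qtar p₀.1 p₀.2 + α * bellErr P r γ π g p₀.1 p₀.2)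
      ≤ ∑ s, ∑ a, dvisit P π γ μ s a *
          ((1 - α) * bellErr P r γ π Qtar s a + α * bellErr P r γ π g s a) := by
    have hterm : ∀ s a, 0 ≤ dvisit P π γ μ s a *
        ((1 - α) * bellErr P r γ π Qtar s a + α * bellErr P r γ π g s a) :=
      fun s a => mul_nonneg (dvisit_nonneg hP hπ hμ hγ0 hγ1 s a) (hE0 s a)
    calc (1 - γ) * μmin *
          ((1 - α) * bellErr P r γ π Qtar p₀.1 p₀.2 + α * bellErr P r γ π g p₀.1 p₀.2)
        ≤ dvisit P π γ μ p₀.1 p₀.2 *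
          ((1 - α) * bellErr P r γ π Qtar p₀.1 p₀.2 + α * bellErr P r γ π g p₀.1 p₀.2) := by
          refine mul_le_mul_of_nonneg_right ?_ (hE0 p₀.1 p₀.2)
          calc (1 - γ) * μmin ≤ (1 - γ) * μ p₀.1 p₀.2 :=
                mul_le_mul_of_nonneg_left (hμminle p₀.1 p₀.2) (le_of_lt hγpos)
            _ ≤ dvisit P π γ μ p₀.1 p₀.2 := dvisit_ge hP hπ hμ hγ0 hγ1 p₀.1 p₀.2
      _ ≤ ∑ a, dvisit P π γ μ p₀.1 a *
          ((1 - α) * bellErr P r γ π Qtar p₀.1 a + α * bellErr P r γ π g p₀.1 a) :=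
          Finset.single_le_sum (fun a _ => hterm p₀.1 a) (Finset.mem_univ p₀.2)
      _ ≤ ∑ s, ∑ a, dvisit P π γ μ s a *
          ((1 - α) * bellErr P r γ π Qtar s a + α * bellErr P r γ π g s a) :=
          Finset.single_le_sum
            (fun s _ => Finset.sum_nonneg fun a _ => hterm s a) (Finset.mem_univ p₀.1)
  -- linearity of the expectation
  have hTX : ∑ s, ∑ a, dvisit P π γ μ s a *
        ((1 - α) * bellErr P r γ π Qtar s a + α * bellErr P r γ π g s a)
      = (1 - α) * ∑ s, ∑ a, dvisit P π γ μ s a * bellErr P r γ π Qtar s a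
        + α * ∑ s, ∑ a, dvisit P π γ μ s a * bellErr P r γ π g s a := by
    rw [Finset.mul_sum, Finset.mul_sum, ← Finset.sum_add_distrib]
    refine Finset.sum_congr rfl fun s _ => ?_
    rw [Finset.mul_sum, Finset.mul_sum, ← Finset.sum_add_distrib]
    exact Finset.sum_congr rfl fun a _ => by ring
  -- put everything together
  have hc : (0:ℝ) < (1 - γ) ^ 2 * μmin := mul_pos (pow_pos hγpos 2) hμminpos
  refine le_trans hLHS ?_
  rw [one_div, ← hTX]
  rw [le_inv_mul_iff₀ hc]
  calc (1 - γ) ^ 2 * μmin * M = (1 - γ) * μmin * ((1 - γ) * M) := by ring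
    _ ≤ (1 - γ) * μmin *
        ((1 - α) * bellErr P r γ π Qtar p₀.1 p₀.2 + α * bellErr P r γ π g p₀.1 p₀.2) :=
        mul_le_mul_of_nonneg_left hb
          (mul_nonneg (le_of_lt hγpos) (le_of_lt hμminpos))
    _ ≤ ∑ s, ∑ a, dvisit P π γ μ s a *
        ((1 - α) * bellErr P r γ π Qtar s a + α * bellErr P r γ π g s a) := hTlower
end
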